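/- arXiv:0806.4802 — 2 statements merged into one kernel-verified Lean document; each statement's English description precedes it below -/
import Mathlib

section
/- In the discounted Hedge setting, the log-weight-sum satisfies ln(W_j/N) ≤ η·Ĝ_A^j + η²/(4·(α − α²/2)). -/
open Finset

/-- Adjusted cumulative gain of action `i` at the start of round `k` (horizon `j`):
`Ĝ_i^k = Σ_{s=1}^{k-1} (1-α)^{j-1-s}·g_i^s`. -/
noncomputable def Ghat {N : ℕ} (α : ℝ) (j : ℕ) (g : Fin N → ℕ → ℝ)
    (i : Fin N) (k : ℕ) : ℝ :=
  ∑ s ∈ Finset.Icc 1 (k - 1), (1 - α) ^ (j - 1 - s) * g i s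

/-- Hedge's gain in round `k`:
`g_A^k = (Σᵢ e^{η·Ĝ_i^k}·g_i^k) / (Σᵢ e^{η·Ĝ_i^k})`. -/
noncomputable def hedgeGain {N : ℕ} (α η : ℝ) (j : ℕ) (g : Fin N → ℕ → ℝ)
    (k : ℕ) : ℝ :=
  (∑ i, Real.exp (η * Ghat α j g i k) * g i k) /
    ∑ i, Real.exp (η * Ghat α j g i k)

/-- Hedge's adjusted cumulative gain at the start of round `j`:
`Ĝ_A^j = Σ_{s=1}^{j-1} (1-α)^{j-1-s}·g_A^s`. -/
noncomputable def GhatA {N : ℕ} (α η : ℝ) (j : ℕ) (g : Fin N → ℕ → ℝ) : ℝ :=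
  ∑ s ∈ Finset.Icc 1 (j - 1), (1 - α) ^ (j - 1 - s) * hedgeGain α η j g s

/-- The weight sum at the start of round `k`: `W_k = Σᵢ e^{η·Ĝ_i^k}`. -/
noncomputable def Wsum {N : ℕ} (α η : ℝ) (j : ℕ) (g : Fin N → ℕ → ℝ) (k : ℕ) : ℝ :=
  ∑ i, Real.exp (η * Ghat α j g i k)

/-- the log-weight-sum of discounted Hedge satisfies
`ln(W_j/N) ≤ η·Ĝ_A^j + η²/(4(α - α²/2))`. -/

lemma chord_exp {x : ℝ} (t : ℝ) (h1 : -1 ≤ x) (h2 : x ≤ 1) :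
    Real.exp (t * x) ≤ Real.cosh t + x * Real.sinh t := by
  have key := convexOn_exp.2 (Set.mem_univ (-t)) (Set.mem_univ t)
    (by linarith : (0:ℝ) ≤ (1 - x)/2) (by linarith : (0:ℝ) ≤ (1 + x)/2) (by ring)
  simp only [smul_eq_mul] at key
  have e1 : (1 - x)/2 * (-t) + (1 + x)/2 * t = t * x := by ring
  rw [e1] at key
  have e2 : (1 - x)/2 * Real.exp (-t) + (1 + x)/2 * Real.exp t
      = Real.cosh t + x * Real.sinh t := by
    rw [Real.cosh_eq, Real.sinh_eq]; ring
  linarith [key]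

lemma hoeffding_core {m : ℝ} (hm1 : -1 ≤ m) (hm2 : m ≤ 1) (t : ℝ) :
    Real.cosh t + m * Real.sinh t ≤ Real.exp (m * t + t ^ 2 / 2) := by
  have hD : ∀ s : ℝ, 0 < Real.cosh s + m * Real.sinh s := by
    intro s
    rw [Real.cosh_eq, Real.sinh_eq]
    rcases le_total m 0 with h | h
    · nlinarith [Real.exp_pos s, Real.exp_pos (-s)]
    · nlinarith [Real.exp_pos s, Real.exp_pos (-s)]
  set D : ℝ → ℝ := fun s => Real.cosh s + m * Real.sinh s with hDdef
  set Nn : ℝ → ℝ := fun s => Real.sinh s + m * Real.cosh s with hNdef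
  have hD' : ∀ s, HasDerivAt D (Nn s) s := fun s =>
    (Real.hasDerivAt_cosh s).add ((Real.hasDerivAt_sinh s).const_mul m)
  have hN' : ∀ s, HasDerivAt Nn (D s) s := fun s =>
    (Real.hasDerivAt_sinh s).add ((Real.hasDerivAt_cosh s).const_mul m)
  set φ : ℝ → ℝ := fun s => Nn s / D s - (m + s) with hφdef
  have hφ' : ∀ s, HasDerivAt φ ((D s * D s - Nn s * Nn s) / D s ^ 2 - 1) s := by
    intro s
    have h1 := (hN' s).div (hD' s) (hD s).ne'
    have h2 : HasDerivAt (fun y : ℝ => m + y) 1 s := (hasDerivAt_id s).const_add m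
    exact h1.sub h2
  have hφnonpos : ∀ s, (D s * D s - Nn s * Nn s) / D s ^ 2 - 1 ≤ 0 := by
    intro s
    have hds := hD s
    have : (D s * D s - Nn s * Nn s) / D s ^ 2 ≤ 1 := by
      rw [div_le_one (by positivity)]
      nlinarith [sq_nonneg (Nn s)]
    linarith
  have hφanti : Antitone φ :=
    antitone_of_deriv_nonpos (fun s => (hφ' s).differentiableAt)
      (fun s => by rw [(hφ' s).deriv]; exact hφnonpos s)
  have hφ0 : φ 0 = 0 := by simp [hφdef, hNdef, hDdef]
  set f : ℝ → ℝ := fun s => Real.log (D s) - (m * s + s ^ 2 / 2) with hfdef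
  have hf' : ∀ s, HasDerivAt f (φ s) s := by
    intro s
    have h1 := ((hD' s).log (hD s).ne')
    have h2 : HasDerivAt (fun y : ℝ => m * y + y ^ 2 / 2) (m + s) s := by
      have := ((hasDerivAt_id s).const_mul m).add ((hasDerivAt_pow 2 s).div_const 2)
      have he : m * 1 + (2 : ℕ) * s ^ (2 - 1) / 2 = m + s := by norm_num
      rwa [he] at this
    exact h1.sub h2
  have hf0 : f 0 = 0 := by simp [hfdef, hDdef]
  have hft : f t ≤ 0 := by
    rcases le_total 0 t with ht | ht
    · have hanti : AntitoneOn f (Set.Ici 0) := by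
        apply antitoneOn_of_deriv_nonpos (convex_Ici 0)
          (fun s _ => ((hf' s).differentiableAt).continuousAt.continuousWithinAt)
          (fun s _ => ((hf' s).differentiableAt).differentiableWithinAt)
        intro s hs
        rw [(hf' s).deriv]
        have : φ s ≤ φ 0 := hφanti (le_of_lt (by simpa using hs))
        linarith [hφ0 ▸ this]
      have := hanti (Set.self_mem_Ici) (Set.mem_Ici.mpr ht) ht
      linarith [hf0 ▸ this]
    · have hmono : MonotoneOn f (Set.Iic 0) := by
        apply monotoneOn_of_deriv_nonneg (convex_Iic 0)
          (fun s _ => ((hf' s).differentiableAt).continuousAt.continuousWithinAt)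
          (fun s _ => ((hf' s).differentiableAt).differentiableWithinAt)
        intro s hs
        rw [(hf' s).deriv]
        have : φ 0 ≤ φ s := hφanti (le_of_lt (by simpa using hs))
        linarith [hφ0 ▸ this]
      have := hmono (Set.mem_Iic.mpr ht) (Set.self_mem_Iic) ht
      linarith [hf0 ▸ this]
  have : Real.log (D t) ≤ m * t + t ^ 2 / 2 := by
    have : f t ≤ 0 := hft
    simp only [hfdef] at this
    linarith
  exact (Real.log_le_iff_le_exp (hD t)).mp this


lemma weighted_hoeffding {n : ℕ} (hn : 0 < n) (w x : Fin n → ℝ)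
    (hw : ∀ i, 0 < w i) (hx : ∀ i, -1 ≤ x i ∧ x i ≤ 1) (t : ℝ) :
    ∑ i, w i * Real.exp (t * x i) ≤
      (∑ i, w i) * Real.exp (t * ((∑ i, w i * x i) / ∑ i, w i) + t ^ 2 / 2) := by
  have : Nonempty (Fin n) := Fin.pos_iff_nonempty.mp hn
  have hW : 0 < ∑ i, w i := Finset.sum_pos (fun i _ => hw i) Finset.univ_nonempty
  set W := ∑ i, w i with hWdef
  set S := ∑ i, w i * x i with hSdef
  have hS1 : -W ≤ S := by
    rw [hWdef, hSdef, ← Finset.sum_neg_distrib]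
    exact Finset.sum_le_sum fun i _ => by nlinarith [(hx i).1, hw i]
  have hS2 : S ≤ W := Finset.sum_le_sum fun i _ => by nlinarith [(hx i).2, hw i]
  have hm1 : -1 ≤ S / W := by rw [neg_le, ← neg_div]; exact div_le_one_of_le₀ (by linarith) hW.le
  have hm2 : S / W ≤ 1 := div_le_one_of_le₀ hS2 hW.le
  calc ∑ i, w i * Real.exp (t * x i)
      ≤ ∑ i, w i * (Real.cosh t + x i * Real.sinh t) :=
        Finset.sum_le_sum fun i _ =>
          mul_le_mul_of_nonneg_left (chord_exp t (hx i).1 (hx i).2) (hw i).le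
    _ = W * Real.cosh t + S * Real.sinh t := by
        simp only [mul_add, ← mul_assoc]
        rw [Finset.sum_add_distrib, ← Finset.sum_mul, ← Finset.sum_mul]
    _ = W * (Real.cosh t + (S / W) * Real.sinh t) := by field_simp
    _ ≤ W * Real.exp ((S / W) * t + t ^ 2 / 2) :=
        mul_le_mul_of_nonneg_left (hoeffding_core hm1 hm2 t) hW.le
    _ = W * Real.exp (t * (S / W) + t ^ 2 / 2) := by rw [mul_comm (S / W) t]

theorem discountedHedge_log_weight_bound
    (N : ℕ) (hN : 1 ≤ N)
    (α : ℝ) (hα0 : 0 < α) (hα1 : α < 1)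
    (η : ℝ) (hη : 0 < η)
    (j : ℕ) (hj : 1 ≤ j)
    (g : Fin N → ℕ → ℝ)
    (hg : ∀ (i : Fin N) (k : ℕ), 1 ≤ k → k ≤ j - 1 → g i k ∈ Set.Icc (-1 : ℝ) 1)
    : Real.log (Wsum α η j g j / N) ≤
        η * GhatA α η j g + η ^ 2 / (4 * (α - α ^ 2 / 2)) := by
  have hNpos : (0 : ℝ) < N := by exact_mod_cast hN
  have hWpos : ∀ k, 0 < Wsum α η j g k := fun k =>
    Finset.sum_pos (fun i _ => Real.exp_pos _)
      (Finset.univ_nonempty_iff.mpr (Fin.pos_iff_nonempty.mp hN))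
  -- Ghat recurrence
  have hGhat_succ : ∀ (i : Fin N) (k : ℕ), 1 ≤ k →
      Ghat α j g i (k + 1) = Ghat α j g i k + (1 - α) ^ (j - 1 - k) * g i k := by
    intro i k hk
    obtain ⟨k', rfl⟩ : ∃ k', k = k' + 1 := ⟨k - 1, by omega⟩
    unfold Ghat
    rw [Nat.add_sub_cancel, Nat.add_sub_cancel,
      ← Finset.insert_Icc_right_eq_Icc_add_one (by omega : 1 ≤ k' + 1),
      Finset.sum_insert (by simp)]
    ring
  -- one-step bound
  have step : ∀ k, 1 ≤ k → k ≤ j - 1 →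
      Real.log (Wsum α η j g (k + 1)) ≤ Real.log (Wsum α η j g k)
        + η * ((1 - α) ^ (j - 1 - k) * hedgeGain α η j g k)
        + η ^ 2 / 2 * ((1 - α) ^ 2) ^ (j - 1 - k) := by
    intro k hk1 hk2
    set t := η * (1 - α) ^ (j - 1 - k) with htdef
    have hWrec : Wsum α η j g (k + 1)
        = ∑ i, Real.exp (η * Ghat α j g i k) * Real.exp (t * g i k) := by
      unfold Wsum
      refine Finset.sum_congr rfl fun i _ => ?_
      rw [← Real.exp_add, hGhat_succ i k hk1]
      ring_nf
      rw [htdef]; ring_nf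
    have key := weighted_hoeffding (n := N) (by omega)
      (fun i => Real.exp (η * Ghat α j g i k)) (fun i => g i k)
      (fun i => Real.exp_pos _)
      (fun i => ⟨(hg i k hk1 hk2).1, (hg i k hk1 hk2).2⟩) t
    rw [← hWrec] at key
    have hWs : (∑ i, Real.exp (η * Ghat α j g i k)) = Wsum α η j g k := rfl
    rw [hWs] at key
    have hlog := Real.log_le_log (hWpos (k + 1)) key
    rw [Real.log_mul (hWpos k).ne' (Real.exp_pos _).ne', Real.log_exp] at hlog
    have hG : t * ((∑ i, Real.exp (η * Ghat α j g i k) * g i k) /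
        Wsum α η j g k) = η * ((1 - α) ^ (j - 1 - k) * hedgeGain α η j g k) := by
      rw [htdef]; unfold hedgeGain Wsum; ring
    have hp : ((1 - α) ^ (j - 1 - k)) ^ 2 = ((1 - α) ^ 2) ^ (j - 1 - k) := by
      rw [← pow_mul, ← pow_mul, Nat.mul_comm]
    have ht2 : t ^ 2 / 2 = η ^ 2 / 2 * ((1 - α) ^ 2) ^ (j - 1 - k) := by
      rw [htdef, mul_pow, hp]; ring
    linarith [hlog]
  -- induction
  have main : ∀ k, 1 ≤ k → k ≤ j →
      Real.log (Wsum α η j g k) ≤ Real.log N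
        + η * ∑ s ∈ Finset.Icc 1 (k - 1), (1 - α) ^ (j - 1 - s) * hedgeGain α η j g s
        + η ^ 2 / 2 * ∑ s ∈ Finset.Icc 1 (k - 1), ((1 - α) ^ 2) ^ (j - 1 - s) := by
    intro k hk
    induction k, hk using Nat.le_induction with
    | base =>
      intro _
      have h1 : Wsum α η j g 1 = N := by
        unfold Wsum Ghat
        simp
      rw [h1]
      simp
    | succ n hn ih =>
      intro hnj
      have h1 := step n hn (by omega)
      have h2 := ih (by omega)
      have hins : Finset.Icc 1 n = insert n (Finset.Icc 1 (n - 1)) := by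
        obtain ⟨n', rfl⟩ : ∃ n', n = n' + 1 := ⟨n - 1, by omega⟩
        rw [Nat.add_sub_cancel, ← Finset.insert_Icc_right_eq_Icc_add_one (by omega : 1 ≤ n' + 1)]
      rw [Nat.add_sub_cancel, hins,
        Finset.sum_insert (by simp [Finset.mem_Icc]; omega),
        Finset.sum_insert (by simp [Finset.mem_Icc]; omega),
        mul_add, mul_add]
      linarith
  -- conclusion
  have hfin := main j hj le_rfl
  rw [Real.log_div (hWpos j).ne' hNpos.ne']
  have hgeom : ∑ s ∈ Finset.Icc 1 (j - 1), ((1 - α) ^ 2) ^ (j - 1 - s)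
      ≤ 1 / (1 - (1 - α) ^ 2) := by
    set q : ℝ := (1 - α) ^ 2 with hq
    have hq0 : 0 ≤ q := sq_nonneg _
    have hq1 : q < 1 := by nlinarith
    have hre : ∑ s ∈ Finset.Icc 1 (j - 1), q ^ (j - 1 - s)
        = ∑ r ∈ Finset.range (j - 1), q ^ r := by
      refine Finset.sum_nbij' (fun s => j - 1 - s) (fun r => j - 1 - r) ?_ ?_ ?_ ?_ ?_
      · intro a ha; simp only [Finset.mem_Icc] at ha; simp only [Finset.mem_range]; omega
      · intro a ha; simp only [Finset.mem_range] at ha; simp only [Finset.mem_Icc]; omega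
      · intro a ha; simp only [Finset.mem_Icc] at ha
        show j - 1 - (j - 1 - a) = a; omega
      · intro a ha; simp only [Finset.mem_range] at ha
        show j - 1 - (j - 1 - a) = a; omega
      · intro a ha; rfl
    rw [hre]
    have hgs := geom_sum_eq (by linarith : q ≠ 1) (j - 1)
    rw [hgs]
    have hflip : (q ^ (j - 1) - 1) / (q - 1) = (1 - q ^ (j - 1)) / (1 - q) := by
      rw [← neg_div_neg_eq]; ring_nf
    rw [hflip, div_le_div_iff₀ (by linarith) (by linarith)]
    nlinarith [pow_nonneg hq0 (j - 1)]
  have hconst : η ^ 2 / 2 * (1 / (1 - (1 - α) ^ 2)) = η ^ 2 / (4 * (α - α ^ 2 / 2)) := by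
    rw [div_mul_div_comm, mul_one,
      (by ring : (2:ℝ) * (1 - (1 - α) ^ 2) = 4 * (α - α ^ 2 / 2))]
  have hGA : η * GhatA α η j g
      = η * ∑ s ∈ Finset.Icc 1 (j - 1), (1 - α) ^ (j - 1 - s) * hedgeGain α η j g s := rfl
  have hη2 : η ^ 2 / 2 * ∑ s ∈ Finset.Icc 1 (j - 1), ((1 - α) ^ 2) ^ (j - 1 - s)
      ≤ η ^ 2 / (4 * (α - α ^ 2 / 2)) := by
    rw [← hconst]
    apply mul_le_mul_of_nonneg_left hgeom (by positivity)
  rw [hGA]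
  linarith
end

section
/- In the discounted Hedge setting with N ≥ 2 actions and learning rate tuned to η = √(4·(α − α²/2)·ln N), the discounted cumulative regret of Hedge to any action i at the start of round j satisfies Ĝ_i^j − Ĝ_A^j ≤ √(ln N/(α − α²/2)). -/
open Finset

/-! ### Auxiliary lemmas -/

lemma aux_denom_pos (μ t : ℝ) (hμ : -1 ≤ μ) (ht : 0 ≤ t) :
    0 < Real.cosh t + μ * Real.sinh t := by
  have h1 : Real.sinh t ≥ 0 := Real.sinh_nonneg_iff.mpr ht
  have h2 : Real.cosh t - Real.sinh t = Real.exp (-t) := Real.cosh_sub_sinh t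
  have h3 : 0 < Real.exp (-t) := Real.exp_pos _
  nlinarith

lemma aux_psi_le (μ : ℝ) (hμ : -1 ≤ μ) :
    ∀ t ∈ Set.Ici (0:ℝ),
      (Real.sinh t + μ * Real.cosh t) / (Real.cosh t + μ * Real.sinh t) ≤ μ + t := by
  set ψ : ℝ → ℝ := fun t => (Real.sinh t + μ * Real.cosh t) / (Real.cosh t + μ * Real.sinh t) with hψ
  have hd : ∀ t ∈ Set.Ici (0:ℝ), HasDerivAt ψ (1 - ψ t ^ 2) t := by
    intro t ht
    have hD := aux_denom_pos μ t hμ ht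
    have h1 : HasDerivAt (fun t => Real.sinh t + μ * Real.cosh t)
        (Real.cosh t + μ * Real.sinh t) t :=
      (Real.hasDerivAt_sinh t).add ((Real.hasDerivAt_cosh t).const_mul μ)
    have h2 : HasDerivAt (fun t => Real.cosh t + μ * Real.sinh t)
        (Real.sinh t + μ * Real.cosh t) t :=
      (Real.hasDerivAt_cosh t).add ((Real.hasDerivAt_sinh t).const_mul μ)
    have := h1.div h2 hD.ne'
    refine this.congr_deriv ?_
    simp only [hψ]
    rw [div_pow, one_sub_div (pow_ne_zero 2 hD.ne')]
    ring
  have hk : MonotoneOn (fun t => μ + t - ψ t) (Set.Ici (0:ℝ)) := by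
    apply monotoneOn_of_deriv_nonneg (convex_Ici 0)
    · exact ContinuousOn.sub (by fun_prop) (fun t ht => ((hd t ht).continuousAt).continuousWithinAt)
    · intro t ht
      rw [interior_Ici] at ht
      exact (((hasDerivAt_id t).const_add μ).sub (hd t (show (0:ℝ) ≤ t from le_of_lt ht))).differentiableAt.differentiableWithinAt
    · intro t ht
      rw [interior_Ici] at ht
      have hder : HasDerivAt (fun t => μ + t - ψ t) (1 - (1 - ψ t ^ 2)) t :=
        ((hasDerivAt_id t).const_add μ).sub (hd t (show (0:ℝ) ≤ t from le_of_lt ht))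
      rw [hder.deriv]
      nlinarith [sq_nonneg (ψ t)]
  intro t ht
  have h0 : ψ 0 = μ := by simp [hψ]
  have h2 := hk (Set.self_mem_Ici) ht ht
  simp only [h0] at h2
  have : ψ t ≤ μ + t := by simpa using h2
  exact this

lemma aux_cosh_add_mul_sinh_le (μ : ℝ) (hμ : -1 ≤ μ) (t : ℝ) (ht : 0 ≤ t) :
    Real.cosh t + μ * Real.sinh t ≤ Real.exp (μ * t + t ^ 2 / 2) := by
  set D : ℝ → ℝ := fun t => Real.cosh t + μ * Real.sinh t with hDdef
  have hDpos : ∀ s ∈ Set.Ici (0:ℝ), 0 < D s := fun s hs => aux_denom_pos μ s hμ hs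
  have hdD : ∀ s : ℝ, HasDerivAt D (Real.sinh s + μ * Real.cosh s) s := fun s =>
    (Real.hasDerivAt_cosh s).add ((Real.hasDerivAt_sinh s).const_mul μ)
  set G : ℝ → ℝ := fun t => μ * t + t ^ 2 / 2 - Real.log (D t) with hGdef
  have hdG : ∀ s ∈ Set.Ici (0:ℝ), HasDerivAt G
      (μ + s - (Real.sinh s + μ * Real.cosh s) / D s) s := by
    intro s hs
    have h1 : HasDerivAt (fun t : ℝ => μ * t + t ^ 2 / 2) (μ + s) s := by
      have := ((hasDerivAt_id s).const_mul μ).add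
        (((hasDerivAt_id s).pow 2).div_const 2)
      exact this.congr_deriv (by norm_num)
    exact h1.sub ((hdD s).log (hDpos s hs).ne')
  have hmono : MonotoneOn G (Set.Ici (0:ℝ)) := by
    apply monotoneOn_of_deriv_nonneg (convex_Ici 0)
    · exact fun s hs => ((hdG s hs).continuousAt).continuousWithinAt
    · intro s hs
      rw [interior_Ici] at hs
      exact (hdG s (show (0:ℝ) ≤ s from le_of_lt hs)).differentiableAt.differentiableWithinAt
    · intro s hs
      rw [interior_Ici] at hs
      rw [(hdG s (show (0:ℝ) ≤ s from le_of_lt hs)).deriv]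
      have := aux_psi_le μ hμ s (show (0:ℝ) ≤ s from le_of_lt hs)
      linarith
  have hG0 : G 0 = 0 := by simp [hGdef, hDdef]
  have := hmono (Set.self_mem_Ici) (Set.mem_Ici.mpr ht) ht
  rw [hG0] at this
  have hlog : Real.log (D t) ≤ μ * t + t ^ 2 / 2 := by
    have h2 : (0:ℝ) ≤ μ * t + t ^ 2 / 2 - Real.log (D t) := this
    linarith
  calc D t = Real.exp (Real.log (D t)) := (Real.exp_log (hDpos t ht)).symm
    _ ≤ Real.exp (μ * t + t ^ 2 / 2) := Real.exp_le_exp.mpr hlog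

lemma aux_exp_le_cosh_add (t x : ℝ) (hx1 : -1 ≤ x) (hx2 : x ≤ 1) :
    Real.exp (t * x) ≤ Real.cosh t + x * Real.sinh t := by
  have ha : (0:ℝ) ≤ (1 - x) / 2 := by linarith
  have hb : (0:ℝ) ≤ (1 + x) / 2 := by linarith
  have hab : (1 - x) / 2 + (1 + x) / 2 = 1 := by ring
  have := convexOn_exp.2 (Set.mem_univ (-t)) (Set.mem_univ t) ha hb hab
  simp only [smul_eq_mul] at this
  have heq : (1 - x) / 2 * (-t) + (1 + x) / 2 * t = t * x := by ring
  rw [heq] at this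
  calc Real.exp (t * x) ≤ (1 - x) / 2 * Real.exp (-t) + (1 + x) / 2 * Real.exp t := this
    _ = Real.cosh t + x * Real.sinh t := by rw [Real.cosh_eq, Real.sinh_eq]; ring

lemma aux_hoeffding_fin {N : ℕ} (p x : Fin N → ℝ) (hp0 : ∀ i, 0 ≤ p i)
    (hp1 : ∑ i, p i = 1) (hx : ∀ i, -1 ≤ x i ∧ x i ≤ 1) (t : ℝ) (ht : 0 ≤ t) :
    ∑ i, p i * Real.exp (t * x i) ≤
      Real.exp (t * (∑ i, p i * x i) + t ^ 2 / 2) := by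
  set μ := ∑ i, p i * x i with hμdef
  have hμ1 : -1 ≤ μ := by
    have : ∑ i, p i * (-1:ℝ) ≤ ∑ i, p i * x i :=
      Finset.sum_le_sum fun i _ => mul_le_mul_of_nonneg_left (hx i).1 (hp0 i)
    simpa [← Finset.sum_mul, hp1] using this
  calc ∑ i, p i * Real.exp (t * x i)
      ≤ ∑ i, p i * (Real.cosh t + x i * Real.sinh t) :=
        Finset.sum_le_sum fun i _ =>
          mul_le_mul_of_nonneg_left (aux_exp_le_cosh_add t (x i) (hx i).1 (hx i).2) (hp0 i)
    _ = Real.cosh t + μ * Real.sinh t := by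
        simp only [mul_add, Finset.sum_add_distrib, ← Finset.sum_mul, hp1, hμdef]
        rw [one_mul, Finset.sum_mul]
        congr 1
        apply Finset.sum_congr rfl
        intro i _
        ring
    _ ≤ Real.exp (μ * t + t ^ 2 / 2) := aux_cosh_add_mul_sinh_le μ hμ1 t ht
    _ = Real.exp (t * μ + t ^ 2 / 2) := by rw [mul_comm μ t]

lemma aux_Wsum_pos {N : ℕ} (hN : 0 < N) (α η : ℝ) (j : ℕ) (g : Fin N → ℕ → ℝ) (k : ℕ) :
    0 < Wsum α η j g k := by
  have : Nonempty (Fin N) := Fin.pos_iff_nonempty.mp hN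
  exact Finset.sum_pos (fun i _ => Real.exp_pos _) Finset.univ_nonempty

lemma aux_Ghat_succ {N : ℕ} (α : ℝ) (j : ℕ) (g : Fin N → ℕ → ℝ) (i : Fin N) (m : ℕ) :
    Ghat α j g i (m + 2) = Ghat α j g i (m + 1) + (1 - α) ^ (j - 1 - (m + 1)) * g i (m + 1) := by
  unfold Ghat
  have h1 : m + 2 - 1 = m + 1 := rfl
  have h2 : m + 1 - 1 = m := rfl
  rw [h1, h2]
  exact Finset.sum_Icc_succ_top (Nat.one_le_iff_ne_zero.mpr (Nat.succ_ne_zero m)) _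

lemma aux_log_Wsum_step {N : ℕ} (hN : 0 < N) {α η : ℝ} (hα : α ≤ 1) (hη : 0 ≤ η)
    (j : ℕ) (g : Fin N → ℕ → ℝ) (m : ℕ)
    (hgm : ∀ i : Fin N, -1 ≤ g i (m + 1) ∧ g i (m + 1) ≤ 1) :
    Real.log (Wsum α η j g (m + 2)) ≤ Real.log (Wsum α η j g (m + 1))
      + (η * (1 - α) ^ (j - 1 - (m + 1)) * hedgeGain α η j g (m + 1)
        + (η * (1 - α) ^ (j - 1 - (m + 1))) ^ 2 / 2) := by
  set c : ℝ := (1 - α) ^ (j - 1 - (m + 1)) with hc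
  have hc0 : 0 ≤ c := pow_nonneg (by linarith) _
  set t : ℝ := η * c with htdef
  have ht0 : 0 ≤ t := mul_nonneg hη hc0
  set W : ℝ := Wsum α η j g (m + 1) with hW
  have hWpos : 0 < W := aux_Wsum_pos hN α η j g (m + 1)
  set p : Fin N → ℝ := fun i => Real.exp (η * Ghat α j g i (m + 1)) / W with hp
  set x : Fin N → ℝ := fun i => g i (m + 1) with hx
  have hp0 : ∀ i, 0 ≤ p i := fun i => div_nonneg (Real.exp_pos _).le hWpos.le
  have hp1 : ∑ i, p i = 1 := by
    rw [hp, ← Finset.sum_div]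
    exact div_self hWpos.ne'
  have hμeq : ∑ i, p i * x i = hedgeGain α η j g (m + 1) := by
    rw [hedgeGain,
      show (∑ i, Real.exp (η * Ghat α j g i (m + 1))) = W from rfl, Finset.sum_div]
    apply Finset.sum_congr rfl
    intro a _
    simp only [hp, hx]
    ring
  have hkey : Wsum α η j g (m + 2) = W * ∑ i, p i * Real.exp (t * x i) := by
    rw [Wsum, Finset.mul_sum]
    apply Finset.sum_congr rfl
    intro i _
    rw [aux_Ghat_succ α j g i m]
    rw [hp, hx]
    rw [mul_add, Real.exp_add]
    field_simp
    ring_nf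
    rw [htdef, hc]
    ring_nf
  have hhoef := aux_hoeffding_fin p x hp0 hp1 (fun i => hgm i) t ht0
  rw [hμeq] at hhoef
  have hle : Wsum α η j g (m + 2) ≤
      W * Real.exp (t * hedgeGain α η j g (m + 1) + t ^ 2 / 2) := by
    rw [hkey]
    exact mul_le_mul_of_nonneg_left hhoef hWpos.le
  have hpos2 : 0 < Wsum α η j g (m + 2) := aux_Wsum_pos hN α η j g (m + 2)
  have := Real.log_le_log hpos2 hle
  rw [Real.log_mul hWpos.ne' (Real.exp_pos _).ne', Real.log_exp] at this
  calc Real.log (Wsum α η j g (m + 2))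
      ≤ Real.log W + (t * hedgeGain α η j g (m + 1) + t ^ 2 / 2) := this
    _ = Real.log W + (η * c * hedgeGain α η j g (m + 1) + (η * c) ^ 2 / 2) := by
        rw [htdef]

lemma aux_log_Wsum_bound {N : ℕ} (hN : 0 < N) {α η : ℝ} (hα : α ≤ 1) (hη : 0 ≤ η)
    (j : ℕ) (g : Fin N → ℕ → ℝ)
    (hg : ∀ (i : Fin N) (k : ℕ), 1 ≤ k → k ≤ j - 1 → -1 ≤ g i k ∧ g i k ≤ 1) :
    ∀ m, m ≤ j - 1 → Real.log (Wsum α η j g (m + 1)) ≤ Real.log N +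
      ∑ s ∈ Finset.Icc 1 m, (η * (1 - α) ^ (j - 1 - s) * hedgeGain α η j g s
        + (η * (1 - α) ^ (j - 1 - s)) ^ 2 / 2) := by
  intro m
  induction m with
  | zero =>
      intro _
      have h1 : ∀ i : Fin N, Ghat α j g i 1 = 0 := by
        intro i
        unfold Ghat
        simp
      have h2 : Wsum α η j g 1 = N := by
        unfold Wsum
        simp [h1]
      rw [h2]
      simp
  | succ m ih =>
      intro hm
      have hm' : m ≤ j - 1 := Nat.le_of_succ_le hm
      have hstep := aux_log_Wsum_step hN hα hη j g m
        (fun i => hg i (m + 1) (Nat.succ_le_succ (Nat.zero_le m)) hm)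
      have hIH := ih hm'
      rw [Finset.sum_Icc_succ_top (Nat.one_le_iff_ne_zero.mpr (Nat.succ_ne_zero m))]
      calc Real.log (Wsum α η j g (m + 2))
          ≤ Real.log (Wsum α η j g (m + 1))
            + (η * (1 - α) ^ (j - 1 - (m + 1)) * hedgeGain α η j g (m + 1)
              + (η * (1 - α) ^ (j - 1 - (m + 1))) ^ 2 / 2) := hstep
        _ ≤ _ := by linarith

/-- with `N ≥ 2` actions and the tuned learning rate
`η = √(4(α - α²/2)·ln N)`, the discounted cumulative regret of Hedge to any action `i`
satisfies `Ĝ_i^j - Ĝ_A^j ≤ √(ln N/(α - α²/2))`. -/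
theorem discountedHedge_tuned_regret_bound
    (N : ℕ) (hN : 2 ≤ N)
    (α : ℝ) (hα0 : 0 < α) (hα1 : α < 1)
    (η : ℝ) (hη : η = Real.sqrt (4 * (α - α ^ 2 / 2) * Real.log N))
    (j : ℕ) (hj : 1 ≤ j)
    (g : Fin N → ℕ → ℝ)
    (hg : ∀ (i : Fin N) (k : ℕ), 1 ≤ k → k ≤ j - 1 → g i k ∈ Set.Icc (-1 : ℝ) 1)
    (i : Fin N) :
    Ghat α j g i j - GhatA α η j g ≤
      Real.sqrt (Real.log N / (α - α ^ 2 / 2)) := by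
  have hN0 : 0 < N := by omega
  set β : ℝ := α - α ^ 2 / 2 with hβ
  have hβpos : 0 < β := by
    have h1 : (0:ℝ) < α * (2 - α) := mul_pos hα0 (by linarith)
    have h2 : α * (2 - α) = 2 * (α - α ^ 2 / 2) := by ring
    rw [hβ]
    linarith [h2 ▸ h1]
  have hL : 0 < Real.log N := Real.log_pos (by exact_mod_cast hN)
  set L : ℝ := Real.log N with hLdef
  have hη0 : 0 ≤ η := hη ▸ Real.sqrt_nonneg _
  -- main log-sum bound at m = j - 1
  have hbound := aux_log_Wsum_bound hN0 (le_of_lt hα1) hη0 j g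
    (fun i k h1 h2 => ⟨(hg i k h1 h2).1, (hg i k h1 h2).2⟩) (j - 1) le_rfl
  have hjj : j - 1 + 1 = j := Nat.succ_pred_eq_of_pos hj
  rw [hjj] at hbound
  -- lower bound on log Wsum j
  have hWj : 0 < Wsum α η j g j := aux_Wsum_pos hN0 α η j g j
  have hlow : η * Ghat α j g i j ≤ Real.log (Wsum α η j g j) := by
    have hsingle : Real.exp (η * Ghat α j g i j) ≤ Wsum α η j g j :=
      Finset.single_le_sum (f := fun i => Real.exp (η * Ghat α j g i j))
        (fun i _ => (Real.exp_pos _).le) (Finset.mem_univ i)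
    have := Real.log_le_log (Real.exp_pos _) hsingle
    rwa [Real.log_exp] at this
  -- split the sum
  have hsplit : ∑ s ∈ Finset.Icc 1 (j - 1), (η * (1 - α) ^ (j - 1 - s) * hedgeGain α η j g s
        + (η * (1 - α) ^ (j - 1 - s)) ^ 2 / 2)
      = η * GhatA α η j g
        + (η ^ 2 / 2) * ∑ s ∈ Finset.Icc 1 (j - 1), ((1 - α) ^ 2) ^ (j - 1 - s) := by
    rw [Finset.sum_add_distrib, GhatA, Finset.mul_sum, Finset.mul_sum]
    congr 1
    · apply Finset.sum_congr rfl; intro s _; ring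
    · apply Finset.sum_congr rfl; intro s _
      rw [← pow_mul, mul_comm 2 (j - 1 - s), pow_mul]
      ring
  -- geometric sum bound
  set q : ℝ := (1 - α) ^ 2 with hq
  have hq0 : 0 ≤ q := sq_nonneg _
  have hq1 : 1 - q = 2 * β := by rw [hq, hβ]; ring
  have hgeom : ∑ s ∈ Finset.Icc 1 (j - 1), q ^ (j - 1 - s) ≤ 1 / (2 * β) := by
    have hre : ∑ s ∈ Finset.Icc 1 (j - 1), q ^ (j - 1 - s)
        = ∑ m ∈ Finset.range (j - 1), q ^ m := by
      apply Finset.sum_nbij' (i := fun s => j - 1 - s) (j := fun m => j - 1 - m)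
      · intro a ha; simp only [Finset.mem_Icc] at ha; simp only [Finset.mem_range]; omega
      · intro a ha; simp only [Finset.mem_range] at ha; simp only [Finset.mem_Icc]; omega
      · intro a ha; simp only [Finset.mem_Icc] at ha; omega
      · intro a ha; simp only [Finset.mem_range] at ha; omega
      · intro a _; rfl
    rw [hre]
    have hmul := geom_sum_mul q (j - 1)
    have hqn : 0 ≤ q ^ (j - 1) := pow_nonneg hq0 _
    rw [le_div_iff₀ (by linarith)]
    nlinarith
  -- combine
  have hcomb : η * (Ghat α j g i j - GhatA α η j g) ≤ L + η ^ 2 / (4 * β) := by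
    rw [hsplit] at hbound
    have h1 : η * Ghat α j g i j ≤ L + (η * GhatA α η j g
        + (η ^ 2 / 2) * ∑ s ∈ Finset.Icc 1 (j - 1), q ^ (j - 1 - s)) :=
      le_trans hlow hbound
    have h2 : (η ^ 2 / 2) * ∑ s ∈ Finset.Icc 1 (j - 1), q ^ (j - 1 - s)
        ≤ (η ^ 2 / 2) * (1 / (2 * β)) :=
      mul_le_mul_of_nonneg_left hgeom (by positivity)
    have h3 : (η ^ 2 / 2) * (1 / (2 * β)) = η ^ 2 / (4 * β) := by
      rw [div_mul_div_comm, mul_one]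
      congr 1
      ring
    linarith
  -- tuned learning rate algebra
  set s : ℝ := Real.sqrt (L / β) with hs
  have hs0 : 0 ≤ s := Real.sqrt_nonneg _
  have hs2 : s ^ 2 = L / β := Real.sq_sqrt (by positivity)
  have hspos : 0 < s := Real.sqrt_pos.mpr (by positivity)
  have hβs2 : β * s ^ 2 = L := by rw [hs2]; field_simp
  have hηval : η = 2 * β * s := by
    have hsq : (2 * β * s) ^ 2 = 4 * β * L := by
      have : (2 * β * s) ^ 2 = 4 * β ^ 2 * s ^ 2 := by ring
      rw [this, hs2]; field_simp
    rw [hη, ← hsq, Real.sqrt_sq (by positivity)]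
  -- finish
  have hfinal : 2 * β * s * (Ghat α j g i j - GhatA α η j g) ≤ 2 * β * s * s := by
    have hη2 : η ^ 2 = 4 * β ^ 2 * s ^ 2 := by rw [hηval]; ring
    have h4 : η ^ 2 / (4 * β) = β * s ^ 2 := by rw [hη2]; field_simp
    calc 2 * β * s * (Ghat α j g i j - GhatA α η j g)
        = η * (Ghat α j g i j - GhatA α η j g) := by rw [hηval]
      _ ≤ L + η ^ 2 / (4 * β) := hcomb
      _ = β * s ^ 2 + β * s ^ 2 := by rw [h4, ← hβs2]
      _ = 2 * β * s * s := by ring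
  have := le_of_mul_le_mul_left hfinal (by positivity : (0:ℝ) < 2 * β * s)
  exact this
end
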